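/- Let d ∈ ℕ, let L₁, L₂ : EuclideanSpace ℝ (Fin d) → ℝ be twice continuously differentiable and let α ∈ ℝ. Set F = −gradient L₁ and G = −gradient L₂, and define the Lie bracket [∇L₁, ∇L₂](w) = (fderiv ℝ (gradient L₂) w)(gradient L₁ w) − (fderiv ℝ (gradient L₁) w)(gradient L₂ w). Then for every w: α·(fderiv ℝ G w)(F(w)) − (1/2)·(fderiv ℝ (F + α•G) w)((F + α•G)(w)) = (α/2)·[∇L₁, ∇L₂](w) − gradient (fun u => (1/4)·‖gradient L₁ u‖² + (α²/4)·‖gradient L₂ u‖²) w. -/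

import Mathlib

open InnerProductSpace

section aux

variable {E : Type*} [NormedAddCommGroup E] [InnerProductSpace ℝ E] [CompleteSpace E]

local notation "⟪" x ", " y "⟫" => @inner ℝ _ _ x y

lemma contDiff_gradient {L : E → ℝ} (hL : ContDiff ℝ 2 L) :
    ContDiff ℝ 1 (gradient L) := by
  have h1 : ContDiff ℝ 1 (fderiv ℝ L) := hL.fderiv_right (by norm_num)
  exact ((toDual ℝ E).symm.contDiff).comp h1

lemma fderiv_gradient_apply {L : E → ℝ} (hL : ContDiff ℝ 2 L) (w v : E) :
    fderiv ℝ (gradient L) w v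
      = (toDual ℝ E).symm (fderiv ℝ (fderiv ℝ L) w v) := by
  have hd : DifferentiableAt ℝ (fderiv ℝ L) w :=
    ((hL.fderiv_right (m := 1) (by norm_num)).differentiable one_ne_zero) w
  have h : gradient L = (toDual ℝ E).symm ∘ fderiv ℝ L := rfl
  rw [h, LinearIsometryEquiv.comp_fderiv]
  simp

lemma inner_fderiv_gradient {L : E → ℝ} (hL : ContDiff ℝ 2 L) (w v x : E) :
    ⟪fderiv ℝ (gradient L) w v, x⟫ = fderiv ℝ (fderiv ℝ L) w v x := by
  rw [fderiv_gradient_apply hL]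
  simp [toDual_symm_apply]

/-- self-adjointness of the Hessian -/
lemma fderiv_gradient_symm {L : E → ℝ} (hL : ContDiff ℝ 2 L) (w v x : E) :
    ⟪fderiv ℝ (gradient L) w v, x⟫ = ⟪fderiv ℝ (gradient L) w x, v⟫ := by
  rw [inner_fderiv_gradient hL, inner_fderiv_gradient hL]
  exact hL.contDiffAt.isSymmSndFDerivAt (by norm_num) v x

lemma hasGradientAt_sq_norm_gradient {L : E → ℝ} (hL : ContDiff ℝ 2 L) (w : E) :
    HasGradientAt (fun u => ‖gradient L u‖ ^ 2)
      ((2 : ℝ) • fderiv ℝ (gradient L) w (gradient L w)) w := by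
  set g := gradient L
  set A := fderiv ℝ g w
  have hg : HasFDerivAt g A w :=
    (((contDiff_gradient hL).differentiable one_ne_zero) w).hasFDerivAt
  have h1 : HasFDerivAt (fun u => ⟪g u, g u⟫)
      ((fderivInnerCLM ℝ (g w, g w)).comp (A.prod A)) w := hg.inner ℝ hg
  have h2 : (fderivInnerCLM ℝ (g w, g w)).comp (A.prod A)
      = toDual ℝ E ((2 : ℝ) • A (g w)) := by
    ext v
    simp only [ContinuousLinearMap.comp_apply, ContinuousLinearMap.prod_apply,
      fderivInnerCLM_apply, toDual_apply_apply, inner_smul_left]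
    have hs := fderiv_gradient_symm hL w (g w) v
    rw [real_inner_comm (g w) (A v)] at hs ⊢
    rw [hs]
    simp [two_mul, mul_comm]
  rw [h2] at h1
  have h3 : HasGradientAt (fun u => ⟪g u, g u⟫) ((2 : ℝ) • A (g w)) w := by
    rw [hasGradientAt_iff_hasFDerivAt]; exact h1
  have h4 : (fun u => ‖g u‖ ^ 2) = fun u => ⟪g u, g u⟫ := by
    funext u; rw [real_inner_self_eq_norm_sq]
  rw [h4]
  exact h3

end aux

/-- **Matching condition for the first-order correction of the modified equation.**
With `F = −∇L₁`, `G = −∇L₂` and the Lie bracket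
`[∇L₁,∇L₂](w) = (∇(∇L₂)(w))(∇L₁(w)) − (∇(∇L₁)(w))(∇L₂(w))`, for every `w`:
`α(∇G(w))(F(w)) − ½(∇(F+αG)(w))((F+αG)(w))
  = (α/2)[∇L₁,∇L₂](w) − ∇((1/4)‖∇L₁‖² + (α²/4)‖∇L₂‖²)(w)`. -/
theorem stmt_2 (d : ℕ) (L₁ L₂ : EuclideanSpace ℝ (Fin d) → ℝ)
    (hL₁ : ContDiff ℝ 2 L₁) (hL₂ : ContDiff ℝ 2 L₂) (α : ℝ)
    (F G : EuclideanSpace ℝ (Fin d) → EuclideanSpace ℝ (Fin d))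
    (hF : F = fun w => -gradient L₁ w) (hG : G = fun w => -gradient L₂ w)
    (w : EuclideanSpace ℝ (Fin d)) :
    α • (fderiv ℝ G w (F w)) - (1 / 2 : ℝ) • (fderiv ℝ (F + α • G) w ((F + α • G) w))
      = (α / 2) • (fderiv ℝ (gradient L₂) w (gradient L₁ w)
            - fderiv ℝ (gradient L₁) w (gradient L₂ w))
        - gradient (fun u => (1 / 4 : ℝ) * ‖gradient L₁ u‖ ^ 2
            + (α ^ 2 / 4) * ‖gradient L₂ u‖ ^ 2) w := by
  set g₁ := gradient L₁
  set g₂ := gradient L₂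
  have hd₁ : Differentiable ℝ g₁ := (contDiff_gradient hL₁).differentiable one_ne_zero
  have hd₂ : Differentiable ℝ g₂ := (contDiff_gradient hL₂).differentiable one_ne_zero
  set A₁ := fderiv ℝ g₁ w
  set A₂ := fderiv ℝ g₂ w
  -- gradient of the regularizer
  have hreg : gradient (fun u => (1 / 4 : ℝ) * ‖g₁ u‖ ^ 2
      + (α ^ 2 / 4) * ‖g₂ u‖ ^ 2) w
      = (1 / 2 : ℝ) • A₁ (g₁ w) + (α ^ 2 / 2) • A₂ (g₂ w) := by
    have h1 := hasGradientAt_sq_norm_gradient hL₁ w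
    have h2 := hasGradientAt_sq_norm_gradient hL₂ w
    rw [hasGradientAt_iff_hasFDerivAt] at h1 h2
    have h1' := h1.const_mul (1 / 4 : ℝ)
    have h2' := h2.const_mul (α ^ 2 / 4 : ℝ)
    have h3 := h1'.fun_add h2'
    have h4 : HasGradientAt (fun u => (1 / 4 : ℝ) * ‖g₁ u‖ ^ 2
        + (α ^ 2 / 4) * ‖g₂ u‖ ^ 2)
        ((1 / 2 : ℝ) • A₁ (g₁ w) + (α ^ 2 / 2) • A₂ (g₂ w)) w := by
      rw [hasGradientAt_iff_hasFDerivAt]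
      convert h3 using 1
      · rfl
      · rfl
      ext v
      simp [inner_add_left, inner_smul_left]
      ring
    exact h4.gradient
  rw [hreg]
  -- fderivs of F and G
  have hFd : fderiv ℝ F w = -A₁ := by
    rw [hF]; exact fderiv_neg
  have hGd : fderiv ℝ G w = -A₂ := by
    rw [hG]; exact fderiv_neg
  have hFdiff : DifferentiableAt ℝ F w := by
    rw [hF]; exact (hd₁ w).neg
  have hGdiff : DifferentiableAt ℝ G w := by
    rw [hG]; exact (hd₂ w).neg
  have hsum : fderiv ℝ (F + α • G) w = -A₁ + α • (-A₂) := by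
    have : (F + α • G) = fun u => F u + α • G u := rfl
    rw [this, fderiv_fun_add hFdiff (hGdiff.fun_const_smul α), fderiv_fun_const_smul hGdiff, hFd, hGd]
  have happ : (F + α • G) w = -g₁ w + α • (-g₂ w) := by
    simp [hF, hG]
  rw [hsum, happ, hGd, hF]
  simp only [ContinuousLinearMap.add_apply, ContinuousLinearMap.neg_apply,
    ContinuousLinearMap.smul_apply, map_add, map_neg, map_smul, smul_neg, neg_neg]
  module
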